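/- Let G ∈ Digraph(k) and G_j ∈ Digraph(n_j) for j = 1,...,k (simple directed graphs, i.e., irreflexive relations on vertex sets). Then the walk-tree construction intertwines composition: Walk(G(G_1,...,G_k)) = Walk(G)(Walk(G_1),...,Walk(G_k)), where on the left G(G_1,...,G_k) is the digraph composition and on the right is the tree-operad composition. -/

import Mathlib

/-- The walk tree of a digraph: the empty string together with all strings
`j₁ … j_ℓ` such that `j_ℓ, j_{ℓ-1}, …, j₁` is a walk on the digraph
(consecutive letters adjacent, read right to left). -/
def WalkSet {α : Type*} (R : α → α → Prop) : Set (List α) :=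
  {L | L.Chain' (fun a b => R b a)}

/-- Operadic composition of rooted subtrees of string trees. -/
def Compose {k : ℕ} {n : Fin k → ℕ} (T : Set (List (Fin k)))
    (Ts : ∀ i : Fin k, Set (List (Fin (n i)))) :
    Set (List (Σ i : Fin k, Fin (n i))) :=
  { w | ∃ c : List (Σ i : Fin k, List (Fin (n i))),
      c.map Sigma.fst ∈ T ∧ (∀ p ∈ c, p.2 ∈ Ts p.1 ∧ p.2 ≠ []) ∧
      w = c.foldr
        (fun p acc => p.2.map (fun x => (⟨p.1, x⟩ : Σ i : Fin k, Fin (n i))) ++ acc) [] }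

/-- Composition of simple digraphs: on the disjoint union of the vertex sets,
put an edge from every vertex of `G_i` to every vertex of `G_j` whenever
`i ∼_G j`, and keep the edges of each `G_j`. -/
def DigraphCompose {k : ℕ} {n : Fin k → ℕ} (G : Fin k → Fin k → Prop)
    (Gs : ∀ i : Fin k, Fin (n i) → Fin (n i) → Prop) :
    (Σ i : Fin k, Fin (n i)) → (Σ i : Fin k, Fin (n i)) → Prop :=
  fun p q => G p.1 q.1 ∨
    ∃ (i : Fin k) (v w : Fin (n i)), p = ⟨i, v⟩ ∧ q = ⟨i, w⟩ ∧ Gs i v w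

lemma walk_of_blocks {k : ℕ} {n : Fin k → ℕ} (G : Fin k → Fin k → Prop)
    (Gs : ∀ i : Fin k, Fin (n i) → Fin (n i) → Prop)
    (c : List (Σ i : Fin k, List (Fin (n i))))
    (h1 : (c.map Sigma.fst).Chain' (fun a b => G b a))
    (h2 : ∀ p ∈ c, p.2.Chain' (fun a b => Gs p.1 b a) ∧ p.2 ≠ []) :
    (c.foldr
        (fun p acc => p.2.map (fun x => (⟨p.1, x⟩ : Σ i : Fin k, Fin (n i))) ++ acc)
        []).Chain' (fun a b => DigraphCompose G Gs b a) := by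
  induction c with
  | nil => simp [List.Chain']
  | cons p c' ih =>
    simp only [List.foldr_cons]
    rw [List.Chain', List.isChain_append]
    refine ⟨?_, ih (by simpa [List.Chain'] using h1.tail) (fun q hq => h2 q (List.mem_cons_of_mem _ hq)), ?_⟩
    · rw [List.isChain_map]
      exact ((h2 p List.mem_cons_self).1).imp
        (fun a b hab => Or.inr ⟨p.1, b, a, rfl, rfl, hab⟩)
    · intro x hx y hy
      cases c' with
      | nil => simp at hy
      | cons q c'' =>
        obtain ⟨hqc, hqne⟩ := h2 q (by simp)
        obtain ⟨z, zs, hz⟩ := List.exists_cons_of_ne_nil hqne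
        have hx' : x.1 = p.1 := by
          have := List.mem_of_mem_getLast? hx
          obtain ⟨a, -, rfl⟩ := List.mem_map.mp this
          rfl
        have hy' : y = ⟨q.1, z⟩ := by
          simp only [List.foldr_cons, hz, List.map_cons, List.cons_append,
            List.head?_cons, Option.mem_def, Option.some.injEq] at hy
          exact hy.symm
        left
        rw [hx', hy']
        simp only [List.Chain', List.map_cons, List.isChain_cons_cons] at h1
        exact h1.1

/-- The walk-tree construction intertwines digraph composition and tree
composition: `Walk(G(G₁,…,G_k)) = Walk(G)(Walk(G₁),…,Walk(G_k))`. -/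
theorem stmt15 {k : ℕ} {n : Fin k → ℕ} (G : Fin k → Fin k → Prop)
    (Gs : ∀ i : Fin k, Fin (n i) → Fin (n i) → Prop)
    (hG : ∀ i, ¬ G i i) (hGs : ∀ i v, ¬ Gs i v v) :
    WalkSet (DigraphCompose G Gs) = Compose (WalkSet G) (fun i => WalkSet (Gs i)) := by
  ext w
  simp only [WalkSet, Compose, Set.mem_setOf_eq]
  constructor
  · induction w with
    | nil => exact fun _ => ⟨[], by simp [List.Chain'], by simp, rfl⟩
    | cons a t ih =>
      intro hw
      cases t with
      | nil =>
        refine ⟨[⟨a.1, [a.2]⟩], by simp [List.Chain'], ?_, by simp⟩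
        intro p hp
        simp only [List.mem_singleton] at hp
        subst hp
        exact ⟨List.isChain_singleton _, by simp⟩
      | cons b t' =>
        obtain ⟨c, hc1, hc2, hc3⟩ := ih hw.tail
        have hD : DigraphCompose G Gs b a := (List.isChain_cons_cons.mp hw).1
        cases c with
        | nil => simp at hc3
        | cons P c' =>
          obtain ⟨j, l⟩ := P
          have hlchain : l.Chain' (fun a b => Gs j b a) := (hc2 ⟨j, l⟩ (by simp)).1
          have hlne : l ≠ [] := (hc2 ⟨j, l⟩ (by simp)).2
          obtain ⟨x, l', rfl⟩ := List.exists_cons_of_ne_nil hlne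
          simp only [List.foldr_cons, List.map_cons, List.cons_append] at hc3
          obtain ⟨hb, ht'⟩ := List.cons_eq_cons.mp hc3
          subst hb
          rcases hD with hG' | ⟨i, v, w', hbv, hav, hvw⟩
          · refine ⟨⟨a.1, [a.2]⟩ :: ⟨j, x :: l'⟩ :: c', ?_, ?_, ?_⟩
            · exact List.isChain_cons_cons.mpr ⟨hG', by simpa [List.Chain'] using hc1⟩
            · intro p hp
              rcases List.mem_cons.mp hp with rfl | hp
              · exact ⟨List.isChain_singleton _, by simp⟩
              · exact hc2 p hp
            · simp [ht']
          · obtain ⟨rfl, hxv⟩ := Sigma.mk.inj_iff.mp hbv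
            have hv : x = v := eq_of_heq hxv
            subst hv
            subst hav
            refine ⟨⟨j, w' :: x :: l'⟩ :: c', by simpa using hc1, ?_, ?_⟩
            · intro p hp
              rcases List.mem_cons.mp hp with rfl | hp
              · exact ⟨List.isChain_cons_cons.mpr ⟨hvw, hlchain⟩, by simp⟩
              · exact hc2 p (List.mem_cons_of_mem _ hp)
            · simp [ht']
  · rintro ⟨c, h1, h2, rfl⟩
    exact walk_of_blocks G Gs c h1 h2
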